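/- Let φ : ℝᵐ → ℝ be bounded below by φ* ∈ ℝ, let (p_k) be a sequence in ℝᵐ with gradient directions g_k ∈ ℝᵐ, let (M_k) be symmetric positive definite m×m matrices, and let γ ≥ 1, δ ≥ 0, ϑ_min > 0, Λ > 0. Assume for every k: φ(p_{k+1}) ≤ φ(p_k) − (ϑ_min²/(4γ)) g_kᵀM_k⁻¹g_k, and qᵀM_k q ≤ Λ ‖q‖² for all q ∈ ℝᵐ. Then for every k ≥ 1, Σ_{j=0}^{k−1} ‖g_j‖² ≤ 4γΛ(φ(p_0) − φ*)/ϑ_min². -/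

import Mathlib

open Matrix

lemma inv_quad_lower {m : ℕ} (M : Matrix (Fin m) (Fin m) ℝ) (hs : M.IsSymm)
    (hpd : M.PosDef) (Λ : ℝ) (hΛ : 0 < Λ) (g : Fin m → ℝ)
    (hb : g ⬝ᵥ M *ᵥ g ≤ Λ * (g ⬝ᵥ g)) :
    g ⬝ᵥ g ≤ Λ * (g ⬝ᵥ M⁻¹ *ᵥ g) := by
  have hdet : IsUnit M.det := isUnit_iff_ne_zero.mpr hpd.det_pos.ne'
  have hMinvM : M⁻¹ * M = 1 := Matrix.nonsing_inv_mul M hdet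
  have hinvT : M⁻¹ᵀ = M⁻¹ := by
    rw [Matrix.transpose_nonsing_inv, hs]
  set u : Fin m → ℝ := g - Λ⁻¹ • (M *ᵥ g) with hu
  have h0 : 0 ≤ u ⬝ᵥ M⁻¹ *ᵥ u := by
    have := hpd.inv.posSemidef.dotProduct_mulVec_nonneg u
    simpa using this
  have hMg : M⁻¹ *ᵥ (M *ᵥ g) = g := by
    rw [Matrix.mulVec_mulVec, hMinvM, Matrix.one_mulVec]
  have hcross : (M *ᵥ g) ⬝ᵥ (M⁻¹ *ᵥ g) = g ⬝ᵥ g := by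
    rw [Matrix.dotProduct_mulVec, ← hinvT, Matrix.vecMul_transpose, hMg]
  have hexp : u ⬝ᵥ M⁻¹ *ᵥ u
      = g ⬝ᵥ M⁻¹ *ᵥ g - 2 * Λ⁻¹ * (g ⬝ᵥ g) + Λ⁻¹ ^ 2 * (g ⬝ᵥ M *ᵥ g) := by
    rw [hu]
    simp only [Matrix.mulVec_sub, Matrix.mulVec_smul, sub_dotProduct,
      dotProduct_sub, smul_dotProduct, dotProduct_smul,
      hMg, hcross, smul_eq_mul, dotProduct_comm (M *ᵥ g) g]
    ring
  have hΛ' : Λ⁻¹ > 0 := inv_pos.mpr hΛ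
  have h1 : 0 ≤ g ⬝ᵥ M⁻¹ *ᵥ g - 2 * Λ⁻¹ * (g ⬝ᵥ g) + Λ⁻¹ ^ 2 * (g ⬝ᵥ M *ᵥ g) := hexp ▸ h0
  have hΛne : Λ ≠ 0 := hΛ.ne'
  have h2 : Λ⁻¹ * (g ⬝ᵥ M *ᵥ g) ≤ g ⬝ᵥ g := by
    rw [inv_mul_le_iff₀ hΛ]; exact hb
  nlinarith [mul_le_mul_of_nonneg_left h2 hΛ'.le, mul_inv_cancel₀ hΛne, h1,
    mul_le_mul_of_nonneg_left h1 hΛ.le]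

theorem gradient_sum_bound {m : ℕ} (φ : (Fin m → ℝ) → ℝ) (φstar : ℝ)
    (hlow : ∀ x, φstar ≤ φ x)
    (p g : ℕ → Fin m → ℝ) (M : ℕ → Matrix (Fin m) (Fin m) ℝ)
    (hMs : ∀ k, (M k).IsSymm) (hMpd : ∀ k, (M k).PosDef)
    (γ δ ϑmin Λ : ℝ) (hγ : 1 ≤ γ) (hδ : 0 ≤ δ) (hϑ : 0 < ϑmin) (hΛ : 0 < Λ)
    (hdesc : ∀ k, φ (p (k+1)) ≤ φ (p k) - (ϑmin^2 / (4 * γ)) * (g k ⬝ᵥ (M k)⁻¹ *ᵥ g k))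
    (hbound : ∀ k, ∀ q : Fin m → ℝ, q ⬝ᵥ (M k) *ᵥ q ≤ Λ * ∑ i, (q i)^2) :
    ∀ k : ℕ, 1 ≤ k →
      ∑ j ∈ Finset.range k, ∑ i, (g j i)^2
        ≤ 4 * γ * Λ * (φ (p 0) - φstar) / ϑmin^2 := by
  intro k hk
  have hγ0 : 0 < γ := lt_of_lt_of_le one_pos hγ
  have hgg : ∀ v : Fin m → ℝ, ∑ i, (v i)^2 = v ⬝ᵥ v := by
    intro v; simp [dotProduct, sq]
  set c := ϑmin^2 / (4 * γ) with hc
  have hc0 : 0 < c := div_pos (pow_pos hϑ 2) (by linarith)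
  set Q : ℕ → ℝ := fun j => g j ⬝ᵥ (M j)⁻¹ *ᵥ g j with hQ
  have hq : ∀ j, ∑ i, (g j i)^2 ≤ Λ * Q j := by
    intro j
    rw [hgg]
    exact inv_quad_lower (M j) (hMs j) (hMpd j) Λ hΛ (g j)
      (by rw [← hgg]; exact hbound j (g j))
  have hsum : ∀ n, ∑ j ∈ Finset.range n, c * Q j ≤ φ (p 0) - φ (p n) := by
    intro n
    induction n with
    | zero => simp
    | succ n ih =>
      rw [Finset.sum_range_succ]
      have := hdesc n
      linarith
  have hS : c * ∑ j ∈ Finset.range k, Q j ≤ φ (p 0) - φstar := by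
    rw [Finset.mul_sum]
    exact le_trans (hsum k) (by linarith [hlow (p k)])
  have h3 : ∑ j ∈ Finset.range k, ∑ i, (g j i)^2 ≤ Λ * ∑ j ∈ Finset.range k, Q j := by
    rw [Finset.mul_sum]
    exact Finset.sum_le_sum fun j _ => hq j
  have h4 : Λ * ∑ j ∈ Finset.range k, Q j ≤ Λ * ((φ (p 0) - φstar) / c) :=
    mul_le_mul_of_nonneg_left ((le_div_iff₀' hc0).mpr hS) hΛ.le
  have h5 : Λ * ((φ (p 0) - φstar) / c) = 4 * γ * Λ * (φ (p 0) - φstar) / ϑmin^2 := by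
    rw [hc]; field_simp
  linarith
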